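/- arXiv:1803.03005 — 2 statements merged into one kernel-verified Lean document; each statement's English description precedes it below -/
import Mathlib

section
/- Let $k \ge 2$ and let $t_{n,0} = t_{n-1} < \dots < t_{n,k} = t_n$ be Gauss–Lobatto nodes on $I_n = [t_{n-1}, t_n]$ whose quadrature rule $Q_n$ with positive weights is exact on $\mathbb{P}_{2k-1}$. Let $u \in \mathbb{P}_{k+2}(I_n; \mathbb{R})$ (playing the role of the Hermite interpolate $I^{k+2}_\tau u$) and let $R u \in \mathbb{P}_{k+1}(I_n; \mathbb{R})$ be defined by $(Ru)'(t_{n,\mu}) = u'(t_{n,\mu})$ for $\mu = 0,\dots,k$ and $Ru(t_{n-1}) = u(t_{n-1})$. Then $Ru(t_n) = u(t_n)$. -/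
lemma poly_ftc (p : Polynomial ℝ) (a b : ℝ) :
    ∫ s in a..b, p.derivative.eval s = p.eval b - p.eval a := by
  have hc : Continuous fun s : ℝ => p.derivative.eval s := p.derivative.continuous
  have hd : deriv (fun x : ℝ => p.eval x) = fun s => p.derivative.eval s :=
    funext fun x => (p.hasDerivAt x).deriv
  calc ∫ s in a..b, p.derivative.eval s = ∫ s in a..b, deriv (fun x : ℝ => p.eval x) s := by rw [hd]
    _ = p.eval b - p.eval a := intervalIntegral.integral_deriv_eq_sub
        (fun x _ => (p.hasDerivAt x).differentiableAt)
        (hd ▸ hc.continuousOn.intervalIntegrable)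

/-- Core computation of Lemma 4.1: for `k ≥ 2`, Gauss–Lobatto nodes
`t 0 = a < … < t k = b` with positive weights and quadrature exact on `ℙ_{2k-1}`,
if `Ru ∈ ℙ_{k+1}` satisfies `(Ru)'(t_μ) = u'(t_μ)` for all nodes and `Ru(a) = u(a)`
for a polynomial `u ∈ ℙ_{k+2}`, then `Ru(b) = u(b)`. -/
theorem stmt12 (k : ℕ) (hk : 2 ≤ k) (a b : ℝ) (hab : a < b)
    (t : Fin (k + 1) → ℝ) (ht : StrictMono t) (ht0 : t 0 = a) (htk : t (Fin.last k) = b)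
    (ω : Fin (k + 1) → ℝ) (hω : ∀ μ, 0 < ω μ)
    (hexact : ∀ g : Polynomial ℝ, g.natDegree ≤ 2 * k - 1 →
      ∑ μ, ω μ * g.eval (t μ) = ∫ s in a..b, g.eval s)
    (u Ru : Polynomial ℝ) (hu : u.natDegree ≤ k + 2) (hRu : Ru.natDegree ≤ k + 1)
    (hder : ∀ μ, Ru.derivative.eval (t μ) = u.derivative.eval (t μ))
    (hval : Ru.eval a = u.eval a) :
    Ru.eval b = u.eval b := by
  have h1 : Ru.derivative.natDegree ≤ 2 * k - 1 := by
    have := Ru.natDegree_derivative_le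
    omega
  have h2 : u.derivative.natDegree ≤ 2 * k - 1 := by
    have := u.natDegree_derivative_le
    omega
  have key : ∫ s in a..b, Ru.derivative.eval s = ∫ s in a..b, u.derivative.eval s := by
    rw [← hexact _ h1, ← hexact _ h2]
    exact Finset.sum_congr rfl fun μ _ => by rw [hder μ]
  have := poly_ftc Ru a b
  have := poly_ftc u a b
  linarith
end

section
/- Let $k \ge 1$ and let $Q_n$ be a quadrature rule with $k+1$ nodes $t_{n,0},\dots,t_{n,k}$ on $I_n$, exact on polynomials of degree at most $2k-1$. Let $V$ be a real inner product space, let $G \in \mathbb{P}_k(I_n; V)$, and suppose that $Q_n(\langle G(\cdot), \phi(\cdot)\rangle) = 0$ for all $\phi \in \mathbb{P}_{k-1}(I_n; V)$ and additionally $G(t_{n,0}) = 0$. Then $G(t_{n,\mu}) = 0$ for all $\mu = 0, 1, \dots, k$, and hence $G \equiv 0$ on $I_n$. -/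
open scoped RealInnerProductSpace
open MeasureTheory Polynomial Finset

lemma polyIntegralPos (q : Polynomial ℝ) (a b : ℝ) (hab : a < b)
    (hnn : ∀ x ∈ Set.Icc a b, 0 ≤ q.eval x) (c : ℝ) (hc : c ∈ Set.Icc a b)
    (hqc : 0 < q.eval c) : 0 < ∫ s in a..b, q.eval s := by
  have hq0 : q ≠ 0 := fun h => by simp [h] at hqc
  rw [intervalIntegral.integral_of_le hab.le]
  have hcont : Continuous fun x => q.eval x := q.continuous
  have hint : IntegrableOn (fun x => q.eval x) (Set.Ioc a b) volume :=
    hcont.integrableOn_Ioc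
  rw [setIntegral_pos_iff_support_of_nonneg_ae ?_ hint]
  · have hsub : Set.Ioc a b \ {x | q.IsRoot x} ⊆
        Function.support (fun x => q.eval x) ∩ Set.Ioc a b := by
      rintro x ⟨hx1, hx2⟩
      exact ⟨hx2, hx1⟩
    calc (0:ENNReal) < volume (Set.Ioc a b \ {x | q.IsRoot x}) := by
          rw [measure_diff_null ((Polynomial.finite_setOf_isRoot hq0).measure_zero _)]
          simp [Real.volume_Ioc, hab]
      _ ≤ _ := measure_mono hsub
  · rw [Filter.EventuallyLE, ae_restrict_iff' measurableSet_Ioc]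
    exact Filter.Eventually.of_forall fun x hx => hnn x ⟨hx.1.le, hx.2⟩

/-- Abstract version of the argument in Lemma 3.7, eqs. (3.15)–(3.16): if a `V`-valued
polynomial `G` of degree at most `k` satisfies `Q_n(⟨G, φ⟩) = 0` for all `V`-valued
polynomial test functions `φ` of degree at most `k-1`, and `G` vanishes at the first
quadrature node, then `G` vanishes at all quadrature nodes and hence identically. -/
theorem stmt18 {V : Type*} [NormedAddCommGroup V] [InnerProductSpace ℝ V]
    (k : ℕ) (hk : 1 ≤ k) (a b : ℝ) (hab : a < b)
    (t : Fin (k + 1) → ℝ) (ht : StrictMono t) (ht0 : t 0 = a) (htk : t (Fin.last k) = b)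
    (ω : Fin (k + 1) → ℝ)
    (hexact : ∀ g : Polynomial ℝ, g.natDegree ≤ 2 * k - 1 →
      ∑ μ, ω μ * g.eval (t μ) = ∫ s in a..b, g.eval s)
    (cG : ℕ → V) (G : ℝ → V)
    (hG : ∀ s, G s = ∑ j ∈ Finset.range (k + 1), s ^ j • cG j)
    (horth : ∀ d : ℕ → V,
      ∑ μ, ω μ * ⟪G (t μ), ∑ j ∈ Finset.range k, (t μ) ^ j • d j⟫ = 0)
    (h0 : G (t 0) = 0) :
    (∀ μ, G (t μ) = 0) ∧ ∀ s ∈ Set.Icc a b, G s = 0 := by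
  classical
  have hinj : Function.Injective t := ht.injective
  have hat : ∀ i, a ≤ t i := fun i => ht0 ▸ ht.monotone (Fin.zero_le i)
  have htb : ∀ i, t i ≤ b := fun i => htk ▸ ht.monotone (Fin.le_last i)
  have hta : ∀ i : Fin (k + 1), i ≠ 0 → a < t i := fun i hi =>
    ht0 ▸ ht (Fin.pos_of_ne_zero hi)
  -- the set of "other interior" nodes
  set S : Fin (k + 1) → Finset (Fin (k + 1)) :=
    fun i => (Finset.univ.erase 0).erase i with hS
  have hScard : ∀ i : Fin (k + 1), i ≠ 0 → (S i).card = k - 1 := by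
    intro i hi
    rw [hS]
    rw [Finset.card_erase_of_mem (Finset.mem_erase.mpr ⟨hi, Finset.mem_univ i⟩),
      Finset.card_erase_of_mem (Finset.mem_univ 0), Finset.card_univ, Fintype.card_fin]
    omega
  have hmemS : ∀ i μ : Fin (k + 1), μ ≠ 0 → μ ≠ i → μ ∈ S i := fun i μ h1 h2 =>
    Finset.mem_erase.mpr ⟨h2, Finset.mem_erase.mpr ⟨h1, Finset.mem_univ μ⟩⟩
  -- Step 1: positivity of the weights ω i for i ≠ 0
  have hωpos : ∀ i : Fin (k + 1), i ≠ 0 → 0 < ω i := by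
    intro i hi
    set Q : Polynomial ℝ := (X - C a) * ∏ j ∈ S i, (X - C (t j)) ^ 2 with hQ
    have hQeval : ∀ x : ℝ, Q.eval x = (x - a) * ∏ j ∈ S i, (x - t j) ^ 2 := by
      intro x; simp [hQ, eval_prod]
    have hQdeg : Q.natDegree ≤ 2 * k - 1 := by
      refine natDegree_mul_le.trans ?_
      have h1 : (X - C a : Polynomial ℝ).natDegree ≤ 1 := (natDegree_X_sub_C a).le
      have h2 : (∏ j ∈ S i, ((X : Polynomial ℝ) - C (t j)) ^ 2).natDegree ≤ 2 * (k - 1) := by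
        refine (natDegree_prod_le _ _).trans ?_
        have : ∀ j ∈ S i, (((X : Polynomial ℝ) - C (t j)) ^ 2).natDegree ≤ 2 := by
          intro j _
          refine natDegree_pow_le.trans ?_
          simp [natDegree_X_sub_C]
        calc ∑ j ∈ S i, (((X : Polynomial ℝ) - C (t j)) ^ 2).natDegree
            ≤ ∑ _j ∈ S i, 2 := Finset.sum_le_sum this
          _ = (S i).card * 2 := by rw [Finset.sum_const, smul_eq_mul]
          _ = 2 * (k - 1) := by rw [hScard i hi]; ring
      omega
    have hQnn : ∀ x ∈ Set.Icc a b, 0 ≤ Q.eval x := by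
      intro x hx
      rw [hQeval]
      exact mul_nonneg (sub_nonneg.mpr hx.1) (Finset.prod_nonneg fun j _ => sq_nonneg _)
    have hQipos : 0 < Q.eval (t i) := by
      rw [hQeval]
      refine mul_pos (sub_pos.mpr (hta i hi)) (Finset.prod_pos fun j hj => ?_)
      have hne : t i - t j ≠ 0 :=
        sub_ne_zero.mpr fun h => (Finset.mem_erase.mp hj).1 (hinj h).symm
      positivity
    have hIpos : 0 < ∫ s in a..b, Q.eval s :=
      polyIntegralPos Q a b hab hQnn (t i) ⟨hat i, htb i⟩ hQipos
    have hsum : ∑ μ, ω μ * Q.eval (t μ) = ω i * Q.eval (t i) := by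
      refine Finset.sum_eq_single_of_mem i (Finset.mem_univ i) ?_
      intro μ _ hμi
      by_cases hμ0 : μ = 0
      · rw [hμ0, hQeval, ht0]; ring
      · rw [hQeval, Finset.prod_eq_zero (hmemS i μ hμ0 hμi) (by ring)]; ring
    have := hexact Q hQdeg
    rw [hsum] at this
    nlinarith [hIpos, hQipos]
  -- Step 2: G vanishes at the interior nodes
  have hGi : ∀ i : Fin (k + 1), i ≠ 0 → G (t i) = 0 := by
    intro i hi
    set p : Polynomial ℝ := ∏ j ∈ S i, (C ((t i - t j)⁻¹) * (X - C (t j))) with hp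
    have hpdeg : p.natDegree < k := by
      have : p.natDegree ≤ k - 1 := by
        refine (natDegree_prod_le _ _).trans ?_
        have : ∀ j ∈ S i, ((C ((t i - t j)⁻¹) : Polynomial ℝ) * (X - C (t j))).natDegree ≤ 1 :=
          fun j _ => natDegree_mul_le.trans (by simp [natDegree_X_sub_C])
        refine le_trans (Finset.sum_le_sum (g := fun _ => (1 : ℕ)) this) ?_
        rw [Finset.sum_const, smul_eq_mul, mul_one, hScard i hi]
      omega
    have hpeval : ∀ x : ℝ, p.eval x = ∏ j ∈ S i, (t i - t j)⁻¹ * (x - t j) := by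
      intro x; simp [hp, eval_prod]
    have hpevi : p.eval (t i) = 1 := by
      rw [hpeval]
      refine Finset.prod_eq_one fun j hj => ?_
      exact inv_mul_cancel₀ (sub_ne_zero.mpr fun h => (Finset.mem_erase.mp hj).1 (hinj h).symm)
    have hpevS : ∀ μ ∈ S i, p.eval (t μ) = 0 := by
      intro μ hμ
      rw [hpeval, Finset.prod_eq_zero hμ (by ring)]
    have hkey : ∀ μ : Fin (k + 1),
        ∑ j ∈ Finset.range k, (t μ) ^ j • (p.coeff j • G (t i)) = p.eval (t μ) • G (t i) := by
      intro μ
      rw [eval_eq_sum_range' hpdeg, Finset.sum_smul]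
      exact Finset.sum_congr rfl fun j _ => by rw [smul_smul, mul_comm]
    have horth' := horth fun j => p.coeff j • G (t i)
    have hsum : ∑ μ, ω μ * ⟪G (t μ), ∑ j ∈ Finset.range k, (t μ) ^ j • (p.coeff j • G (t i))⟫
        = ω i * ⟪G (t i), G (t i)⟫ := by
      rw [Finset.sum_eq_single_of_mem i (Finset.mem_univ i) ?_]
      · rw [hkey, hpevi, one_smul]
      · intro μ _ hμi
        by_cases hμ0 : μ = 0
        · rw [hμ0, h0]; simp
        · rw [hkey, hpevS μ (hmemS i μ hμ0 hμi), zero_smul, inner_zero_right, mul_zero]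
    rw [hsum] at horth'
    have := hωpos i hi
    have hin : ⟪G (t i), G (t i)⟫ = 0 := by
      rcases mul_eq_zero.mp horth' with h | h
      · exact absurd h this.ne'
      · exact h
    exact inner_self_eq_zero.mp hin
  have hnodes : ∀ μ, G (t μ) = 0 := by
    intro μ
    by_cases h : μ = 0
    · rw [h]; exact h0
    · exact hGi μ h
  -- Step 3: G vanishes identically
  have hall : ∀ s : ℝ, G s = 0 := by
    intro s
    set P : Polynomial ℝ := ∑ j ∈ Finset.range (k + 1), C (⟪cG j, G s⟫) * X ^ j with hP
    have hinner : ∀ x : ℝ, ⟪G x, G s⟫ = P.eval x := by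
      intro x
      rw [hG x, sum_inner, hP, eval_finset_sum]
      exact Finset.sum_congr rfl fun j _ => by
        rw [real_inner_smul_left, eval_mul, eval_C, eval_pow, eval_X, mul_comm]
    have hPdeg : P.natDegree < Fintype.card (Fin (k + 1)) := by
      rw [Fintype.card_fin]
      refine Nat.lt_succ_of_le ?_
      refine natDegree_sum_le_of_forall_le _ _ fun j hj => ?_
      exact (natDegree_C_mul_X_pow_le _ _).trans (Nat.lt_succ_iff.mp (Finset.mem_range.mp hj))
    have hP0 : P = 0 := by
      refine eq_zero_of_natDegree_lt_card_of_eval_eq_zero P hinj (fun μ => ?_) hPdeg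
      rw [← hinner (t μ), hnodes μ, inner_zero_left]
    have : ⟪G s, G s⟫ = 0 := by rw [hinner s, hP0, eval_zero]
    exact inner_self_eq_zero.mp this
  exact ⟨hnodes, fun s _ => hall s⟩
end
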